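/- The integral ∫_ℝ |ψ̂(λ)|² |λ|^{β−1} dλ is finite and lim_{j→∞} 2^{jβ} ∫_ℝ f_G(λ) |ψ̂(2^j λ)|² dλ = C_G(0) ∫_ℝ |ψ̂(λ)|² |λ|^{β−1} dλ, where the limit is taken over natural numbers j. -/

import Mathlib

open MeasureTheory Filter

lemma aux_int {s b : ℝ} (hs : -1 < s) (hb : 0 < b) :
    Integrable fun x : ℝ => |x| ^ s * Real.exp (-b * |x|) := by
  have hIoi : IntegrableOn (fun x : ℝ => |x| ^ s * Real.exp (-b * |x|)) (Set.Ioi 0) := by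
    have h := integrableOn_rpow_mul_exp_neg_mul_rpow (p := 1) hs one_pos hb
    refine h.congr_fun (fun x hx => ?_) measurableSet_Ioi
    simp only [abs_of_pos (Set.mem_Ioi.mp hx), Real.rpow_one]
  rw [← integrableOn_univ, ← @Set.Iio_union_Ici _ _ (0 : ℝ), integrableOn_union,
    integrableOn_Ici_iff_integrableOn_Ioi]
  refine ⟨?_, hIoi⟩
  rw [← (Measure.measurePreserving_neg (volume : Measure ℝ)).integrableOn_comp_preimage
      (Homeomorph.neg ℝ).measurableEmbedding]
  simpa [Function.comp_def] using hIoi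

/-- Fourier transform `ψ̂(λ) = ∫ e^{-iλt} ψ(t) dt`. -/
noncomputable def fhat (ψ : ℝ → ℝ) (l : ℝ) : ℂ :=
  ∫ t : ℝ, Complex.exp (-(Complex.I * (l : ℂ) * (t : ℂ))) * (ψ t : ℂ)

theorem stmt_1
    (β : ℝ) (hβ : β ∈ Set.Ioo (0 : ℝ) 1)
    (C_G : ℝ → ℝ) (hCG_cont : Continuous C_G) (hCG_bdd : ∃ M : ℝ, ∀ x, C_G x ≤ M)
    (hCG_nonneg : ∀ x, 0 ≤ C_G x) (hCG_even : ∀ x, C_G (-x) = C_G x)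
    (hCG0 : 0 < C_G 0)
    (f_G : ℝ → ℝ) (hfG_nonneg : ∀ x, 0 ≤ f_G x)
    (hfG : ∀ x : ℝ, x ≠ 0 → f_G x = C_G x * |x| ^ (β - 1))
    (hfG_int : Integrable f_G)
    (ψ : ℝ → ℝ) (hψ_int : Integrable ψ) (hψ_sq : Integrable (fun t => (ψ t) ^ 2))
    (hψ_zero : (∫ t : ℝ, ψ t) = 0)
    (α K κ : ℝ) (hα : 1 ≤ α) (hK : 0 < K) (hκ : 0 < κ)
    (Cψ : ℝ → ℂ) (hCψ_cont : Continuous Cψ)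
    (hCψ0 : 0 < (Cψ 0).re ∧ (Cψ 0).im = 0)
    (hCψ_bdd : ∀ l : ℝ, ‖Cψ l‖ ≤ K * Real.exp (-κ * |l|))
    (hhat : ∀ l : ℝ, fhat ψ l = Cψ l * ((|l| ^ α : ℝ) : ℂ)) :
    Integrable (fun l : ℝ => ‖fhat ψ l‖ ^ 2 * |l| ^ (β - 1)) ∧
    Tendsto
      (fun j : ℕ =>
        (2 : ℝ) ^ ((j : ℝ) * β) *
          ∫ l : ℝ, f_G l * ‖fhat ψ ((2 : ℝ) ^ j * l)‖ ^ 2)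
      atTop
      (nhds (C_G 0 * ∫ l : ℝ, ‖fhat ψ l‖ ^ 2 * |l| ^ (β - 1))) := by
  obtain ⟨hβ0, hβ1⟩ := hβ
  set g : ℝ → ℝ := fun l => ‖fhat ψ l‖ ^ 2 * |l| ^ (β - 1) with hg_def
  have habs : ∀ l : ℝ, ‖fhat ψ l‖ = ‖Cψ l‖ * |l| ^ α := by
    intro l
    rw [hhat, norm_mul, Complex.norm_real, Real.norm_eq_abs,
      abs_of_nonneg (Real.rpow_nonneg (abs_nonneg l) α)]
  have hαpos : (0:ℝ) < α := lt_of_lt_of_le one_pos hα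
  -- continuity of |fhat ψ|
  have hcont : Continuous fun l : ℝ => ‖fhat ψ l‖ := by
    have : (fun l : ℝ => ‖fhat ψ l‖)
        = fun l : ℝ => ‖Cψ l‖ * |l| ^ α := funext habs
    rw [this]
    exact (continuous_norm.comp hCψ_cont).mul
      (continuous_abs.rpow_const (fun x => Or.inr hαpos.le))
  -- measurability of g
  have hg_m : Measurable g := by
    have h1 : Measurable fun l : ℝ => |l| ^ (β - 1) := by fun_prop
    exact (hcont.pow 2).measurable.mul h1
  have hg_meas : AEStronglyMeasurable g (volume : Measure ℝ) := hg_m.aestronglyMeasurable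
  have hg_nonneg : ∀ l, 0 ≤ g l := fun l =>
    mul_nonneg (pow_nonneg (norm_nonneg _) 2) (Real.rpow_nonneg (abs_nonneg l) _)
  -- pointwise formula for g
  have hg_eq : ∀ l : ℝ, g l = ‖Cψ l‖ ^ 2 * |l| ^ (α * 2 + (β - 1)) := by
    intro l
    rcases eq_or_ne l 0 with rfl | hl
    · simp [hg_def, Real.zero_rpow (by linarith : α * 2 + (β - 1) ≠ 0),
        Real.zero_rpow (by linarith : β - 1 ≠ 0)]
    · have hl' : 0 < |l| := abs_pos.mpr hl
      rw [hg_def]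
      simp only
      rw [habs, mul_pow, ← Real.rpow_natCast (|l| ^ α) 2, ← Real.rpow_mul (abs_nonneg l),
        mul_assoc, ← Real.rpow_add hl']
      norm_num
  -- integrability of g
  have hg_int : Integrable g := by
    have hbig := aux_int (s := α * 2 + (β - 1)) (b := 2 * κ) (by linarith) (by linarith)
    refine Integrable.mono' (hbig.const_mul (K ^ 2)) hg_meas ?_
    filter_upwards with l
    rw [Real.norm_eq_abs, abs_of_nonneg (hg_nonneg l), hg_eq l]
    have h1 : ‖Cψ l‖ ^ 2 ≤ (K * Real.exp (-κ * |l|)) ^ 2 :=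
      pow_le_pow_left₀ (norm_nonneg _) (hCψ_bdd l) 2
    have h2 : (K * Real.exp (-κ * |l|)) ^ 2 = K ^ 2 * Real.exp (-(2 * κ) * |l|) := by
      rw [mul_pow, ← Real.exp_nat_mul]
      ring_nf
    calc ‖Cψ l‖ ^ 2 * |l| ^ (α * 2 + (β - 1))
        ≤ (K * Real.exp (-κ * |l|)) ^ 2 * |l| ^ (α * 2 + (β - 1)) := by
          exact mul_le_mul_of_nonneg_right h1 (Real.rpow_nonneg (abs_nonneg l) _)
      _ = K ^ 2 * (|l| ^ (α * 2 + (β - 1)) * Real.exp (-(2 * κ) * |l|)) := by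
          rw [h2]; ring
  refine ⟨hg_int, ?_⟩
  -- key identity after change of variables
  have key : ∀ j : ℕ,
      (2 : ℝ) ^ ((j : ℝ) * β) *
          ∫ l : ℝ, f_G l * ‖fhat ψ ((2 : ℝ) ^ j * l)‖ ^ 2
        = ∫ x : ℝ, C_G (x / (2 : ℝ) ^ j) * g x := by
    intro j
    set a : ℝ := (2 : ℝ) ^ j with ha_def
    have ha : (0:ℝ) < a := pow_pos two_pos j
    have ha' : a ≠ 0 := ha.ne'
    set h : ℝ → ℝ := fun x => f_G (x / a) * ‖fhat ψ x‖ ^ 2 with hh_def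
    have e1 : (fun l : ℝ => f_G l * ‖fhat ψ (a * l)‖ ^ 2)
        = fun l => h (a * l) := by
      funext l
      rw [hh_def]
      simp only
      rw [mul_div_cancel_left₀ l ha']
    have e2 : (∫ l : ℝ, h (a * l)) = |a⁻¹| • ∫ x : ℝ, h x :=
      Measure.integral_comp_mul_left h a
    have e3 : (∫ x : ℝ, h x)
        = ∫ x : ℝ, a ^ (1 - β) * (C_G (x / a) * g x) := by
      refine integral_congr_ae ?_
      have h0 : ∀ᵐ (x : ℝ), x ≠ 0 := by
        rw [ae_iff]
        simp only [ne_eq, not_not, Set.setOf_eq_eq_singleton]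
        exact measure_singleton 0
      filter_upwards [h0] with x hx
      have hxa : x / a ≠ 0 := div_ne_zero hx ha'
      rw [hh_def]
      simp only
      rw [hfG _ hxa, hg_def]
      simp only
      have : |x / a| ^ (β - 1) = |x| ^ (β - 1) * a ^ (1 - β) := by
        rw [abs_div, abs_of_pos ha, Real.div_rpow (abs_nonneg x) ha.le,
          div_eq_mul_inv, ← Real.rpow_neg ha.le, neg_sub]
      rw [this]; ring
    have e4 : (∫ x : ℝ, a ^ (1 - β) * (C_G (x / a) * g x))
        = a ^ (1 - β) * ∫ x : ℝ, C_G (x / a) * g x := integral_const_mul _ _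
    rw [e1, e2, e3, e4, smul_eq_mul, abs_of_pos (inv_pos.mpr ha)]
    have hc : (2 : ℝ) ^ ((j : ℝ) * β) * (a⁻¹ * (a ^ (1 - β))) = 1 := by
      have haa : a = (2 : ℝ) ^ (j : ℝ) := (Real.rpow_natCast 2 j).symm
      rw [haa, ← Real.rpow_neg_one, ← Real.rpow_mul (by norm_num : (0:ℝ) ≤ 2),
        ← Real.rpow_mul (by norm_num : (0:ℝ) ≤ 2),
        ← Real.rpow_add (by norm_num : (0:ℝ) < 2),
        ← Real.rpow_add (by norm_num : (0:ℝ) < 2)]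
      rw [show (j : ℝ) * β + ((j : ℝ) * (-1) + (j : ℝ) * (1 - β)) = 0 by ring,
        Real.rpow_zero]
    calc (2 : ℝ) ^ ((j : ℝ) * β) * (a⁻¹ * (a ^ (1 - β) * ∫ x : ℝ, C_G (x / a) * g x))
        = ((2 : ℝ) ^ ((j : ℝ) * β) * (a⁻¹ * a ^ (1 - β))) * ∫ x : ℝ, C_G (x / a) * g x := by
          ring
      _ = ∫ x : ℝ, C_G (x / a) * g x := by rw [hc, one_mul]
  -- dominated convergence
  obtain ⟨M, hM⟩ := hCG_bdd
  have hlim : Tendsto (fun j : ℕ => ∫ x : ℝ, C_G (x / (2 : ℝ) ^ j) * g x) atTop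
      (nhds (∫ x : ℝ, C_G 0 * g x)) := by
    refine tendsto_integral_filter_of_dominated_convergence (fun x => M * g x)
      ?_ ?_ (hg_int.const_mul M) ?_
    · filter_upwards with j
      exact ((hCG_cont.comp (continuous_id.div_const _)).measurable.mul
        hg_m).aestronglyMeasurable
    · filter_upwards with j
      filter_upwards with x
      rw [Real.norm_eq_abs, abs_of_nonneg (mul_nonneg (hCG_nonneg _) (hg_nonneg x))]
      exact mul_le_mul_of_nonneg_right (hM _) (hg_nonneg x)
    · filter_upwards with x
      have h1 : Tendsto (fun j : ℕ => x / (2 : ℝ) ^ j) atTop (nhds 0) := by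
        simp only [div_eq_mul_inv]
        have h2 : Tendsto (fun j : ℕ => ((2 : ℝ) ^ j)⁻¹) atTop (nhds 0) :=
          tendsto_inv_atTop_zero.comp (tendsto_pow_atTop_atTop_of_one_lt one_lt_two)
        simpa using tendsto_const_nhds.mul h2
      exact ((hCG_cont.tendsto 0).comp h1).mul_const (g x)
  have : (∫ x : ℝ, C_G 0 * g x) = C_G 0 * ∫ x : ℝ, g x := integral_const_mul _ _
  rw [this] at hlim
  exact hlim.congr (fun j => (key j).symm)
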